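/- Let ℱ = {K_1, …, K_n} be a family of convex bodies in ℝ^d. Then ℱ is non-separable if and only if for every partition of ℱ into two non-empty subfamilies ℱ₁ and ℱ₂, there exists a subfamily 𝒢 ⊆ ℱ of cardinality at most d+2 such that ⋃(ℱ₁ ∩ 𝒢) is not strictly separated from ⋃(ℱ₂ ∩ 𝒢) by any hyperplane. -/

import Mathlib

open Set Metric
open scoped RealInnerProductSpace

/-- A finite family of sets in `ℝ^d` is non-separable (an NS-family) if no
hyperplane disjoint from the union strictly separates some members from all
the remaining members. -/
def NonSeparableFamily {d n : ℕ} (F : Fin n → Set (EuclideanSpace ℝ (Fin d))) : Prop :=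
  ¬ (∃ (I : Finset (Fin n)) (u : EuclideanSpace ℝ (Fin d)) (α : ℝ),
      I.Nonempty ∧ I ≠ Finset.univ ∧ u ≠ 0 ∧
      (∀ i ∈ I, ∀ y ∈ F i, ⟪u, y⟫ < α) ∧
      (∀ i ∉ I, ∀ y ∈ F i, α < ⟪u, y⟫))

private lemma halfspace_convex_aux {d : ℕ} (y : EuclideanSpace ℝ (Fin d)) :
    Convex ℝ {p : EuclideanSpace ℝ (Fin d) × ℝ | ⟪p.1, y⟫ < p.2} := by
  have hlin : IsLinearMap ℝ (fun p : EuclideanSpace ℝ (Fin d) × ℝ => ⟪p.1, y⟫ - p.2) := by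
    constructor
    · intro p q
      simp [inner_add_left]
      ring
    · intro c p
      simp [real_inner_smul_left, mul_sub, Finset.mul_sum, mul_assoc]
  have := convex_halfSpace_lt (𝕜 := ℝ) hlin (0 : ℝ)
  refine (congrArg (Convex ℝ) ?_).mpr this
  ext p
  simp [sub_lt_iff_lt_add, sub_neg]

private lemma halfspace_convex_aux' {d : ℕ} (y : EuclideanSpace ℝ (Fin d)) :
    Convex ℝ {p : EuclideanSpace ℝ (Fin d) × ℝ | p.2 < ⟪p.1, y⟫} := by
  have hlin : IsLinearMap ℝ (fun p : EuclideanSpace ℝ (Fin d) × ℝ => p.2 - ⟪p.1, y⟫) := by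
    constructor
    · intro p q
      simp [inner_add_left]
      ring
    · intro c p
      simp [real_inner_smul_left, mul_sub, Finset.mul_sum, mul_assoc]
  have := convex_halfSpace_lt (𝕜 := ℝ) hlin (0 : ℝ)
  refine (congrArg (Convex ℝ) ?_).mpr this
  ext p
  simp [sub_lt_iff_lt_add, sub_neg]

/-- A family `ℱ = {K₁, …, Kₙ}` of convex bodies in `ℝ^d` is non-separable iff for
every partition of `ℱ` into non-empty subfamilies `ℱ₁` (indices in `I`) and `ℱ₂`
(the rest), there is a subfamily `𝒢` of cardinality at most `d+2` such that
`⋃(ℱ₁ ∩ 𝒢)` is not strictly separated from `⋃(ℱ₂ ∩ 𝒢)` by any hyperplane. -/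
theorem stmt_9 (d n : ℕ) (K : Fin n → Set (EuclideanSpace ℝ (Fin d)))
    (hconv : ∀ i, Convex ℝ (K i)) (hcpt : ∀ i, IsCompact (K i))
    (hint : ∀ i, (interior (K i)).Nonempty) :
    NonSeparableFamily K ↔
      ∀ I : Finset (Fin n), I.Nonempty → I ≠ Finset.univ →
        ∃ G : Finset (Fin n), G.card ≤ d + 2 ∧
          ¬ (∃ (u : EuclideanSpace ℝ (Fin d)) (α : ℝ), u ≠ 0 ∧
            (∀ i ∈ I ∩ G, ∀ y ∈ K i, ⟪u, y⟫ < α) ∧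
            (∀ i ∈ G \ I, ∀ y ∈ K i, α < ⟪u, y⟫)) := by
  classical
  constructor
  · -- forward: NS → Helly-type condition
    intro hNS I hIne hIuniv
    by_contra hcon
    push_neg at hcon
    -- hcon : ∀ G, G.card ≤ d + 2 → ∃ u α, u ≠ 0 ∧ ...
    -- Define the convex sets of separating hyperplanes
    set C : Fin n → Set (EuclideanSpace ℝ (Fin d) × ℝ) := fun i =>
      if i ∈ I then {p | ∀ y ∈ K i, ⟪p.1, y⟫ < p.2}
      else {p | ∀ y ∈ K i, p.2 < ⟪p.1, y⟫} with hC
    have hCconv : ∀ i, Convex ℝ (C i) := by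
      intro i
      rw [hC]
      by_cases hi : i ∈ I
      · simp only [hi, if_true]
        have : {p : EuclideanSpace ℝ (Fin d) × ℝ | ∀ y ∈ K i, ⟪p.1, y⟫ < p.2}
            = ⋂ y ∈ K i, {p : EuclideanSpace ℝ (Fin d) × ℝ | ⟪p.1, y⟫ < p.2} := by
          ext p; simp
        rw [this]
        exact convex_iInter fun y => convex_iInter fun _ => halfspace_convex_aux y
      · simp only [hi, if_false]
        have : {p : EuclideanSpace ℝ (Fin d) × ℝ | ∀ y ∈ K i, p.2 < ⟪p.1, y⟫}
            = ⋂ y ∈ K i, {p : EuclideanSpace ℝ (Fin d) × ℝ | p.2 < ⟪p.1, y⟫} := by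
          ext p; simp
        rw [this]
        exact convex_iInter fun y => convex_iInter fun _ => halfspace_convex_aux' y
    have hrank : Module.finrank ℝ (EuclideanSpace ℝ (Fin d) × ℝ) = d + 1 := by
      simp
    have hinter : (⋂ i ∈ (Finset.univ : Finset (Fin n)), C i).Nonempty := by
      apply Convex.helly_theorem' (fun i _ => hCconv i)
      intro J _ hJcard
      rw [hrank] at hJcard
      obtain ⟨u, α, -, h1, h2⟩ := hcon J hJcard
      refine ⟨(u, α), ?_⟩
      rw [Set.mem_iInter₂]
      intro i hi
      rw [hC]
      by_cases hiI : i ∈ I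
      · simp only [hiI, if_true]
        exact fun y hy => h1 i (Finset.mem_inter.mpr ⟨hiI, hi⟩) y hy
      · simp only [hiI, if_false]
        exact fun y hy => h2 i (Finset.mem_sdiff.mpr ⟨hi, hiI⟩) y hy
    obtain ⟨⟨u, α⟩, hp⟩ := hinter
    rw [Set.mem_iInter₂] at hp
    have h1 : ∀ i ∈ I, ∀ y ∈ K i, ⟪u, y⟫ < α := by
      intro i hi y hy
      have := hp i (Finset.mem_univ i)
      rw [hC] at this
      simp only [hi, if_true] at this
      exact this y hy
    have h2 : ∀ i ∉ I, ∀ y ∈ K i, α < ⟪u, y⟫ := by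
      intro i hi y hy
      have := hp i (Finset.mem_univ i)
      rw [hC] at this
      simp only [hi, if_false] at this
      exact this y hy
    have hu : u ≠ 0 := by
      intro hu0
      obtain ⟨i0, hi0⟩ := hIne
      obtain ⟨i1, hi1⟩ : ∃ i, i ∉ I := by
        by_contra hall
        push_neg at hall
        exact hIuniv (Finset.eq_univ_iff_forall.mpr hall)
      obtain ⟨y0, hy0⟩ := (hint i0).mono interior_subset
      obtain ⟨y1, hy1⟩ := (hint i1).mono interior_subset
      have ha := h1 i0 hi0 y0 hy0
      have hb := h2 i1 hi1 y1 hy1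
      rw [hu0, inner_zero_left] at ha hb
      linarith
    exact hNS ⟨I, u, α, hIne, hIuniv, hu, h1, h2⟩
  · -- backward
    intro h
    rintro ⟨I, u, α, hIne, hIuniv, hu, h1, h2⟩
    obtain ⟨G, -, hG⟩ := h I hIne hIuniv
    exact hG ⟨u, α, hu, fun i hi y hy => h1 i (Finset.mem_inter.mp hi).1 y hy,
      fun i hi y hy => h2 i ((Finset.mem_sdiff.mp hi).2) y hy⟩
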